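/- Let d, m be integers with d ≥ 3 and m ≥ 3d − 2, and suppose (m−1)!·1 ≠ 0 in k. Let Y ⊆ k be a finite subset of cardinality d whose difference set Y − Y = {y₁ − y₂ : y₁, y₂ ∈ Y} has the maximal cardinality 1 + 2·(d choose 2) = d² − d + 1. Let V = span_k{E_m(y) : y ∈ Y} + (β^m) ⊆ k[β]. Then there is no nonzero pair (A,B) of polynomials with A(0) = B(0) = 0, deg A < m, deg B < m and A·v + B·v′ ∈ V for all v ∈ V; that is, if A, B ∈ k[β] satisfy these conditions then A = B = 0. -/

import Mathlib

open Polynomial Matrix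

noncomputable section

/-- `Algebra` structure on the quotient of a `k`-algebra by a ring congruence. -/
instance RingConQuotient.algebra (k R : Type*) [CommSemiring k] [Ring R] [Algebra k R]
    (c : RingCon R) : Algebra k c.Quotient where
  algebraMap := (RingCon.mk' c).comp (algebraMap k R)
  commutes' := by
    intro r x
    induction x using Quotient.ind
    exact congrArg _ (Algebra.commutes r _)
  smul_def' := by
    intro r x
    induction x using Quotient.ind
    exact congrArg _ (Algebra.smul_def r _)

variable (k : Type*) [Field k]

/-- `D` is a `k`-derivation (as a linear endomorphism of a `k`-algebra). -/
def IsDer {R : Type*} [Ring R] [Algebra k R] (D : R →ₗ[k] R) : Prop :=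
  ∀ x y : R, D (x * y) = D x * y + x * D y

/-- `D` is an inner derivation. -/
def IsInner {R : Type*} [Ring R] [Algebra k R] (D : R →ₗ[k] R) : Prop :=
  ∃ a : R, ∀ x : R, D x = a * x - x * a

/-- The ideal `(β^j)` of `k[β]`, as a `k`-submodule. -/
def Bsub (j : ℕ) : Submodule k (Polynomial k) where
  carrier := {p | X ^ j ∣ p}
  zero_mem' := dvd_zero _
  add_mem' := fun h1 h2 => dvd_add h1 h2
  smul_mem' := fun c p hp => by
    simpa [Polynomial.smul_eq_C_mul] using Dvd.dvd.mul_left hp (C c)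

lemma mem_Bsub {k : Type*} [Field k] {j : ℕ} {p : Polynomial k} :
    p ∈ Bsub k j ↔ X ^ j ∣ p := Iff.rfl

/-- The algebra `T`: upper triangular 3×3 matrices over `k[β]` whose
`(1,1)` and `(3,3)` entries are constants. -/
def Tsub : Subalgebra k (Matrix (Fin 3) (Fin 3) (Polynomial k)) where
  carrier := {M | (∀ i j : Fin 3, j < i → M i j = 0) ∧
      (∃ x : k, M 0 0 = C x) ∧ (∃ z : k, M 2 2 = C z)}
  zero_mem' := ⟨fun _ _ _ => rfl, ⟨0, by simp⟩, ⟨0, by simp⟩⟩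
  one_mem' := ⟨fun i j h => Matrix.one_apply_ne h.ne', ⟨1, by simp⟩, ⟨1, by simp⟩⟩
  add_mem' := by
    rintro a b ⟨hal, ⟨x, hax⟩, ⟨z, haz⟩⟩ ⟨hbl, ⟨y, hby⟩, ⟨w, hbw⟩⟩
    refine ⟨fun i j h => by simp [hal i j h, hbl i j h], ⟨x + y, by simp [hax, hby]⟩,
      ⟨z + w, by simp [haz, hbw]⟩⟩
  mul_mem' := by
    rintro a b ⟨hal, ⟨x, hax⟩, ⟨z, haz⟩⟩ ⟨hbl, ⟨y, hby⟩, ⟨w, hbw⟩⟩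
    refine ⟨fun i j h => ?_, ⟨x * y, ?_⟩, ⟨z * w, ?_⟩⟩
    · rw [Matrix.mul_apply]
      apply Finset.sum_eq_zero
      intro l _
      rcases lt_or_ge l i with hl | hl
      · rw [hal i l hl, zero_mul]
      · rw [hbl l j (lt_of_lt_of_le h hl), mul_zero]
    · rw [Matrix.mul_apply, Fin.sum_univ_three,
        hbl 1 0 (by decide), hbl 2 0 (by decide), hax, hby]
      simp
    · rw [Matrix.mul_apply, Fin.sum_univ_three,
        hal 2 0 (by decide), hal 2 1 (by decide), haz, hbw]
      simp
  algebraMap_mem' := by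
    intro r
    refine ⟨fun i j h => ?_, ⟨r, ?_⟩, ⟨r, ?_⟩⟩
    · rw [Matrix.algebraMap_matrix_apply, if_neg h.ne']
    · rw [Matrix.algebraMap_matrix_apply, if_pos rfl]; rfl
    · rw [Matrix.algebraMap_matrix_apply, if_pos rfl]; rfl

/-- The matrix `p·E₁₂` as an element of `T`. -/
def tE12 (p : Polynomial k) : Tsub k :=
  ⟨Matrix.single 0 1 p, by
    refine ⟨fun i j h => ?_, ⟨0, ?_⟩, ⟨0, ?_⟩⟩
    · fin_cases i <;> fin_cases j <;> simp_all [Matrix.single, Matrix.of_apply]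
    · simp [Matrix.single, Matrix.of_apply]
    · simp [Matrix.single, Matrix.of_apply]⟩

/-- The matrix `p·E₂₂` as an element of `T`. -/
def tE22 (p : Polynomial k) : Tsub k :=
  ⟨Matrix.single 1 1 p, by
    refine ⟨fun i j h => ?_, ⟨0, ?_⟩, ⟨0, ?_⟩⟩
    · fin_cases i <;> fin_cases j <;> simp_all [Matrix.single, Matrix.of_apply]
    · simp [Matrix.single, Matrix.of_apply]
    · simp [Matrix.single, Matrix.of_apply]⟩

/-- The matrix `p·E₂₃` as an element of `T`. -/
def tE23 (p : Polynomial k) : Tsub k :=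
  ⟨Matrix.single 1 2 p, by
    refine ⟨fun i j h => ?_, ⟨0, ?_⟩, ⟨0, ?_⟩⟩
    · fin_cases i <;> fin_cases j <;> simp_all [Matrix.single, Matrix.of_apply]
    · simp [Matrix.single, Matrix.of_apply]
    · simp [Matrix.single, Matrix.of_apply]⟩

/-- The matrix `p·E₁₃` as an element of `T`. -/
def tE13 (p : Polynomial k) : Tsub k :=
  ⟨Matrix.single 0 2 p, by
    refine ⟨fun i j h => ?_, ⟨0, ?_⟩, ⟨0, ?_⟩⟩
    · fin_cases i <;> fin_cases j <;> simp_all [Matrix.single, Matrix.of_apply]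
    · simp [Matrix.single, Matrix.of_apply]
    · simp [Matrix.single, Matrix.of_apply]⟩

/-- The idempotent `E₁₁` as an element of `T`. -/
def tE11 : Tsub k :=
  ⟨Matrix.single 0 0 1, by
    refine ⟨fun i j h => ?_, ⟨1, ?_⟩, ⟨0, ?_⟩⟩
    · fin_cases i <;> fin_cases j <;> simp_all [Matrix.single, Matrix.of_apply]
    · simp [Matrix.single, Matrix.of_apply]
    · simp [Matrix.single, Matrix.of_apply]⟩

/-- The idempotent `E₂₂` as an element of `T`. -/
def tE22one : Tsub k := tE22 k 1

/-- The idempotent `E₃₃` as an element of `T`. -/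
def tE33 : Tsub k :=
  ⟨Matrix.single 2 2 1, by
    refine ⟨fun i j h => ?_, ⟨0, ?_⟩, ⟨1, ?_⟩⟩
    · fin_cases i <;> fin_cases j <;> simp_all [Matrix.single, Matrix.of_apply]
    · simp [Matrix.single, Matrix.of_apply]
    · simp [Matrix.single, Matrix.of_apply]⟩

/-- The underlying set of the ideal `I(n; n', n''; V)` of `T`. -/
def Icar (n n' n'' : ℕ) (V : Submodule k (Polynomial k)) : Set (Tsub k) :=
  {M | (M : Matrix (Fin 3) (Fin 3) (Polynomial k)) 0 0 = 0 ∧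
       (M : Matrix (Fin 3) (Fin 3) (Polynomial k)) 2 2 = 0 ∧
       X ^ n' ∣ (M : Matrix (Fin 3) (Fin 3) (Polynomial k)) 0 1 ∧
       (M : Matrix (Fin 3) (Fin 3) (Polynomial k)) 0 2 ∈ V ∧
       X ^ n ∣ (M : Matrix (Fin 3) (Fin 3) (Polynomial k)) 1 1 ∧
       X ^ n'' ∣ (M : Matrix (Fin 3) (Fin 3) (Polynomial k)) 1 2}

variable {k}

lemma Tsub_lower {a : Tsub k} :
    ∀ i j : Fin 3, j < i → (a : Matrix (Fin 3) (Fin 3) (Polynomial k)) i j = 0 := a.2.1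

lemma Tsub_00 (a : Tsub k) : ∃ x : k, (a : Matrix (Fin 3) (Fin 3) (Polynomial k)) 0 0 = C x :=
  a.2.2.1

lemma Tsub_22 (a : Tsub k) : ∃ z : k, (a : Matrix (Fin 3) (Fin 3) (Polynomial k)) 2 2 = C z :=
  a.2.2.2

variable (k)

/-- The two-sided ideal `I(n; n', n''; V)` of `T`. -/
def Itsi (n n' n'' : ℕ) (V : Submodule k (Polynomial k)) (hn' : n' ≤ n) (hn'' : n'' ≤ n)
    (hV : ∀ p : Polynomial k, X ^ min n' n'' ∣ p → p ∈ V) : TwoSidedIdeal (Tsub k) :=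
  TwoSidedIdeal.mk' (Icar k n n' n'' V)
    (by
      refine ⟨rfl, rfl, ?_, ?_, ?_, ?_⟩ <;> simp)
    (by
      rintro a b ⟨h1, h2, h3, h4, h5, h6⟩ ⟨g1, g2, g3, g4, g5, g6⟩
      refine ⟨?_, ?_, ?_, ?_, ?_, ?_⟩ <;>
        simp only [AddMemClass.coe_add, Matrix.add_apply]
      · rw [h1, g1, add_zero]
      · rw [h2, g2, add_zero]
      · exact dvd_add h3 g3
      · exact V.add_mem h4 g4
      · exact dvd_add h5 g5
      · exact dvd_add h6 g6)
    (by
      rintro a ⟨h1, h2, h3, h4, h5, h6⟩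
      refine ⟨?_, ?_, ?_, ?_, ?_, ?_⟩ <;>
        simp only [NegMemClass.coe_neg, Matrix.neg_apply]
      · rw [h1, neg_zero]
      · rw [h2, neg_zero]
      · exact dvd_neg.mpr h3
      · exact V.neg_mem h4
      · exact dvd_neg.mpr h5
      · exact dvd_neg.mpr h6)
    (by
      rintro t a ⟨h1, h2, h3, h4, h5, h6⟩
      have hta : ((t * a : Tsub k) : Matrix (Fin 3) (Fin 3) (Polynomial k)) =
          (t : Matrix (Fin 3) (Fin 3) (Polynomial k)) * a := rfl
      obtain ⟨x, hx⟩ := Tsub_00 t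
      refine ⟨?_, ?_, ?_, ?_, ?_, ?_⟩ <;>
        rw [hta, Matrix.mul_apply, Fin.sum_univ_three]
      · rw [h1, Tsub_lower (a := a) 1 0 (by decide), Tsub_lower (a := a) 2 0 (by decide)]
        simp
      · rw [h2, Tsub_lower (a := t) 2 0 (by decide), Tsub_lower (a := t) 2 1 (by decide)]
        simp
      · rw [Tsub_lower (a := a) 2 1 (by decide)]
        simp only [mul_zero, add_zero]
        exact dvd_add (Dvd.dvd.mul_left h3 _)
          (Dvd.dvd.mul_left ((pow_dvd_pow X hn').trans h5) _)
      · rw [h2]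
        simp only [mul_zero, add_zero]
        refine V.add_mem ?_
          (hV _ (Dvd.dvd.mul_left ((pow_dvd_pow X (min_le_right n' n'')).trans h6) _))
        rw [hx]
        have : C x * (a : Matrix (Fin 3) (Fin 3) (Polynomial k)) 0 2 =
            x • (a : Matrix (Fin 3) (Fin 3) (Polynomial k)) 0 2 := by
          rw [Polynomial.smul_eq_C_mul]
        rw [this]
        exact V.smul_mem _ h4
      · rw [Tsub_lower (a := t) 1 0 (by decide), Tsub_lower (a := a) 2 1 (by decide)]
        simp only [zero_mul, mul_zero, zero_add, add_zero]
        exact Dvd.dvd.mul_left h5 _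
      · rw [Tsub_lower (a := t) 1 0 (by decide), h2]
        simp only [zero_mul, mul_zero, zero_add, add_zero]
        exact Dvd.dvd.mul_left h6 _)
    (by
      rintro a t ⟨h1, h2, h3, h4, h5, h6⟩
      have hta : ((a * t : Tsub k) : Matrix (Fin 3) (Fin 3) (Polynomial k)) =
          (a : Matrix (Fin 3) (Fin 3) (Polynomial k)) * t := rfl
      obtain ⟨z, hz⟩ := Tsub_22 t
      refine ⟨?_, ?_, ?_, ?_, ?_, ?_⟩ <;>
        rw [hta, Matrix.mul_apply, Fin.sum_univ_three]
      · rw [h1, Tsub_lower (a := t) 1 0 (by decide), Tsub_lower (a := t) 2 0 (by decide)]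
        simp
      · rw [h2, Tsub_lower (a := a) 2 0 (by decide), Tsub_lower (a := a) 2 1 (by decide)]
        simp
      · rw [h1, Tsub_lower (a := t) 2 1 (by decide)]
        simp only [zero_mul, mul_zero, zero_add, add_zero]
        exact Dvd.dvd.mul_right h3 _
      · rw [h1]
        simp only [zero_mul, zero_add]
        refine V.add_mem
          (hV _ (Dvd.dvd.mul_right ((pow_dvd_pow X (min_le_left n' n'')).trans h3) _)) ?_
        rw [hz]
        have : (a : Matrix (Fin 3) (Fin 3) (Polynomial k)) 0 2 * C z =
            z • (a : Matrix (Fin 3) (Fin 3) (Polynomial k)) 0 2 := by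
          rw [Polynomial.smul_eq_C_mul, mul_comm]
        rw [this]
        exact V.smul_mem _ h4
      · rw [Tsub_lower (a := a) 1 0 (by decide), Tsub_lower (a := t) 2 1 (by decide)]
        simp only [zero_mul, mul_zero, zero_add, add_zero]
        exact Dvd.dvd.mul_right h5 _
      · rw [Tsub_lower (a := a) 1 0 (by decide)]
        simp only [zero_mul, zero_add]
        exact dvd_add (Dvd.dvd.mul_right ((pow_dvd_pow X hn'').trans h5) _)
          (Dvd.dvd.mul_right h6 _))

/-- The quotient algebra `A = T / I(n; n', n''; V)`. -/
def Aquot (n n' n'' : ℕ) (V : Submodule k (Polynomial k)) (hn' : n' ≤ n) (hn'' : n'' ≤ n)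
    (hV : ∀ p : Polynomial k, X ^ min n' n'' ∣ p → p ∈ V) : Type _ :=
  (Itsi k n n' n'' V hn' hn'' hV).ringCon.Quotient

instance (n n' n'' : ℕ) (V : Submodule k (Polynomial k)) (hn' : n' ≤ n) (hn'' : n'' ≤ n)
    (hV : ∀ p : Polynomial k, X ^ min n' n'' ∣ p → p ∈ V) :
    Ring (Aquot k n n' n'' V hn' hn'' hV) :=
  inferInstanceAs (Ring (Itsi k n n' n'' V hn' hn'' hV).ringCon.Quotient)

instance (n n' n'' : ℕ) (V : Submodule k (Polynomial k)) (hn' : n' ≤ n) (hn'' : n'' ≤ n)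
    (hV : ∀ p : Polynomial k, X ^ min n' n'' ∣ p → p ∈ V) :
    Algebra k (Aquot k n n' n'' V hn' hn'' hV) :=
  inferInstanceAs (Algebra k (Itsi k n n' n'' V hn' hn'' hV).ringCon.Quotient)

/-- The quotient map `T → A`. -/
def Amk (n n' n'' : ℕ) (V : Submodule k (Polynomial k)) (hn' : n' ≤ n) (hn'' : n'' ≤ n)
    (hV : ∀ p : Polynomial k, X ^ min n' n'' ∣ p → p ∈ V) :
    Tsub k →+* Aquot k n n' n'' V hn' hn'' hV :=
  RingCon.mk' (Itsi k n n' n'' V hn' hn'' hV).ringCon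


/-- The truncated exponential `e^{yβ} mod β^m`. -/
def Em (m : ℕ) (y : k) : Polynomial k :=
  ∑ ν ∈ Finset.range m, C ((ν.factorial : k)⁻¹ * y ^ ν) * X ^ ν

section Aux
variable {k : Type*} [Field k]

lemma Em_coeff (m : ℕ) (y : k) (n : ℕ) :
    (Em k m y).coeff n = if n < m then ((n.factorial : k)⁻¹ * y ^ n) else 0 := by
  rw [Em, Polynomial.finset_sum_coeff]
  simp only [coeff_C_mul, coeff_X_pow, mul_ite, mul_one, mul_zero]
  rw [Finset.sum_ite_eq (Finset.range m) n]
  simp [Finset.mem_range]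

variable {m : ℕ} (hfac : ((m - 1).factorial : k) ≠ 0)

include hfac in
lemma fact_ne {ν : ℕ} (hν : ν < m) : (ν.factorial : k) ≠ 0 := by
  intro h0
  apply hfac
  obtain ⟨t, ht⟩ := Nat.factorial_dvd_factorial (by omega : ν ≤ m - 1)
  rw [ht]
  push_cast
  rw [h0, zero_mul]

include hfac in
lemma Em_mul (y z : k) : X ^ m ∣ Em k m y * Em k m z - Em k m (y + z) := by
  rw [X_pow_dvd_iff]
  intro n hn
  rw [coeff_sub, coeff_mul, Em_coeff, if_pos hn]
  have h1 : ∀ p ∈ Finset.HasAntidiagonal.antidiagonal n, (Em k m y).coeff p.1 * (Em k m z).coeff p.2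
      = ((p.1.factorial : k)⁻¹ * y ^ p.1) * ((p.2.factorial : k)⁻¹ * z ^ p.2) := by
    rintro ⟨i, j⟩ hp
    rw [Finset.HasAntidiagonal.mem_antidiagonal] at hp
    rw [Em_coeff, Em_coeff, if_pos (lt_of_le_of_lt (le_trans (Nat.le_add_right i j) hp.le) hn),
      if_pos (lt_of_le_of_lt (le_trans (Nat.le_add_left j i) hp.le) hn)]
  rw [Finset.sum_congr rfl h1, Finset.Nat.sum_antidiagonal_eq_sum_range_succ
    (fun i j => ((i.factorial : k)⁻¹ * y ^ i) * ((j.factorial : k)⁻¹ * z ^ j))]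
  rw [add_pow, Finset.mul_sum]
  rw [sub_eq_zero]
  refine Finset.sum_congr rfl ?_
  intro i hi
  rw [Finset.mem_range, Nat.lt_succ_iff] at hi
  have key : (n.factorial : k) = (n.choose i : k) * (i.factorial : k) * ((n-i).factorial : k) := by
    rw [← Nat.cast_mul, ← Nat.cast_mul, Nat.choose_mul_factorial_mul_factorial hi]
  have hi' : (i.factorial : k) ≠ 0 := fact_ne hfac (lt_of_le_of_lt hi hn)
  have hj' : ((n-i).factorial : k) ≠ 0 := fact_ne hfac (lt_of_le_of_lt (Nat.sub_le n i) hn)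
  have hn' : (n.factorial : k) ≠ 0 := fact_ne hfac hn
  field_simp
  linear_combination (y ^ i * z ^ (n - i)) * key

lemma Em_zero (hm : 0 < m) : Em k m (0 : k) = 1 := by
  rw [Em, Finset.sum_eq_single 0]
  · simp
  · intro b _ hb
    simp [zero_pow hb]
  · intro h
    exact absurd (Finset.mem_range.mpr hm) h

include hfac in
lemma Em_deriv (hm : 0 < m) (y : k) :
    derivative (Em k m y) = C y * Em k m y
      - C (((m-1).factorial : k)⁻¹ * y ^ m) * X ^ (m - 1) := by
  ext n
  rw [coeff_derivative, coeff_sub, coeff_C_mul, Em_coeff, Em_coeff, coeff_C_mul, coeff_X_pow]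
  rcases lt_trichotomy (n + 1) m with h | h | h
  · have hn : n < m := lt_of_le_of_lt (Nat.le_succ n) h
    have hne : n ≠ m - 1 := by omega
    rw [if_pos h, if_pos hn, if_neg hne, mul_zero, sub_zero]
    have h1 : ((n+1).factorial : k) = ((n:k) + 1) * (n.factorial : k) := by
      rw [Nat.factorial_succ]; push_cast; ring
    have h2 : (n.factorial : k) ≠ 0 := fact_ne hfac hn
    have h3 : ((n:k) + 1) ≠ 0 := by
      intro h0
      apply fact_ne hfac h
      rw [h1, h0, zero_mul]
    field_simp [h1]
    rw [h1]
    ring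
  · have hn : n < m := by omega
    have heq : m - 1 = n := by omega
    rw [if_neg (by omega), if_pos hn, if_pos heq.symm, mul_one, zero_mul, eq_comm, sub_eq_zero]
    have hmn : m = n + 1 := by omega
    rw [hmn]
    simp only [Nat.add_sub_cancel]
    ring
  · rw [if_neg (by omega), if_neg (by omega), if_neg (by omega), zero_mul, mul_zero, mul_zero,
      sub_zero]

include hfac in
lemma indep (hm : 0 < m) (S : Finset k) (hS : S.card ≤ m) (c : k → k)
    (h : X ^ m ∣ ∑ w ∈ S, C (c w) * Em k m w) : ∀ w ∈ S, c w = 0 := by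
  intro w₀ hw₀
  classical
  have hpow : ∀ ν < m, ∑ w ∈ S, c w * w ^ ν = 0 := by
    intro ν hν
    have := (X_pow_dvd_iff.mp h) ν hν
    rw [Polynomial.finset_sum_coeff] at this
    simp only [coeff_C_mul, Em_coeff, if_pos hν] at this
    have h2 : (ν.factorial : k)⁻¹ * ∑ w ∈ S, c w * w ^ ν = 0 := by
      rw [Finset.mul_sum, ← this]
      exact Finset.sum_congr rfl (fun w _ => by ring)
    rcases mul_eq_zero.mp h2 with h3 | h3
    · exact absurd (inv_eq_zero.mp h3) (fact_ne hfac hν)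
    · exact h3
  set p := Lagrange.basis S (id : k → k) w₀ with hp
  have hinj : Set.InjOn (id : k → k) S := Function.injective_id.injOn
  have hdeg : p.degree = ((S.card - 1 : ℕ) : WithBot ℕ) := Lagrange.degree_basis hinj hw₀
  have hnd : p.natDegree < m := by
    have := Polynomial.natDegree_eq_of_degree_eq_some hdeg
    omega
  have key : ∑ w ∈ S, c w * p.eval w = c w₀ := by
    rw [Finset.sum_eq_single w₀]
    · rw [show (w₀ : k) = (id w₀) from rfl, Lagrange.eval_basis_self hinj hw₀, mul_one]
    · intro w hw hne
      rw [show (w : k) = (id w) from rfl, Lagrange.eval_basis_of_ne (Ne.symm hne) hw, mul_zero]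
    · intro h; exact absurd hw₀ h
  rw [← key]
  have : ∀ w ∈ S, c w * p.eval w = ∑ ν ∈ Finset.range m, p.coeff ν * (c w * w ^ ν) := by
    intro w _
    rw [eval_eq_sum_range' hnd, Finset.mul_sum]
    exact Finset.sum_congr rfl (fun ν _ => by ring)
  rw [Finset.sum_congr rfl this, Finset.sum_comm]
  refine Finset.sum_eq_zero (fun ν hν => ?_)
  rw [← Finset.mul_sum, hpow ν (Finset.mem_range.mp hν), mul_zero]


include hfac in
lemma stepA (hm : 0 < m) {Y : Finset k} {A B : Polynomial k}
    (hB0 : B.coeff 0 = 0) (y : k)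
    (hpres : A * Em k m y + B * derivative (Em k m y) ∈
      Submodule.span k ((Em k m) '' ↑Y) ⊔ Bsub k m) :
    ∃ c : k → k, X ^ m ∣ (A + C y * B) - ∑ z ∈ Y, C (c z) * Em k m (z - y) := by
  have h2 : (A + C y * B) * Em k m y ∈ Submodule.span k ((Em k m) '' ↑Y) ⊔ Bsub k m := by
    have hb : B * (C (((m-1).factorial : k)⁻¹ * y ^ m) * X ^ (m-1)) ∈ Bsub k m := by
      rw [mem_Bsub]
      obtain ⟨B', hB'⟩ := Polynomial.X_dvd_iff.mpr hB0
      have hxm : (X : Polynomial k) ^ m = X ^ 1 * X ^ (m-1) := by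
        rw [← pow_add]; congr 1; omega
      rw [hB', hxm]
      exact mul_dvd_mul (by rw [pow_one]; exact dvd_mul_right _ _) (dvd_mul_left _ _)
    have h3 := Submodule.add_mem _ hpres (Submodule.mem_sup_right hb)
    convert h3 using 1
    rw [Em_deriv hfac hm]
    ring
  rw [Submodule.mem_sup] at h2
  obtain ⟨u, hu, r, hr, hur⟩ := h2
  rw [Finsupp.mem_span_image_iff_linearCombination] at hu
  obtain ⟨l, hl, hlu⟩ := hu
  refine ⟨l, ?_⟩
  have hsum : ∑ z ∈ Y, C (l z) * Em k m z = u := by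
    rw [← hlu, Finsupp.linearCombination_apply, Finsupp.sum, eq_comm]
    rw [Finset.sum_congr rfl (fun z _ => (Polynomial.smul_eq_C_mul (l z)).symm ▸ rfl :
      ∀ z ∈ l.support, l z • Em k m z = C (l z) * Em k m z)]
    apply (Finset.sum_subset ?_ ?_)
    · exact Finset.coe_subset.mp ((Finsupp.mem_supported k l).mp hl)
    · intro z _ hz
      rw [Finsupp.notMem_support_iff.mp hz, map_zero, zero_mul]
  have hrepr : (A + C y * B) * Em k m y = (∑ z ∈ Y, C (l z) * Em k m z) + r := by
    rw [hsum, hur]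
  have h3 : (X : Polynomial k) ^ m ∣ (1 - Em k m y * Em k m (-y)) := by
    have h5 := Em_mul hfac y (-y)
    rw [add_neg_cancel, Em_zero hm] at h5
    have := dvd_neg.mpr h5
    rwa [neg_sub] at this
  have h4 : (X : Polynomial k) ^ m ∣
      ∑ z ∈ Y, C (l z) * (Em k m z * Em k m (-y) - Em k m (z - y)) := by
    apply Finset.dvd_sum
    intro z _
    apply Dvd.dvd.mul_left
    have h5 := Em_mul hfac z (-y)
    rwa [← sub_eq_add_neg] at h5
  have hkey : (A + C y * B) - ∑ z ∈ Y, C (l z) * Em k m (z - y) =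
      (A + C y * B) * (1 - Em k m y * Em k m (-y)) + r * Em k m (-y) +
      (∑ z ∈ Y, C (l z) * (Em k m z * Em k m (-y) - Em k m (z - y))) := by
    have e1 : ∑ z ∈ Y, C (l z) * (Em k m z * Em k m (-y) - Em k m (z - y)) =
        (∑ z ∈ Y, C (l z) * Em k m z) * Em k m (-y) -
        ∑ z ∈ Y, C (l z) * Em k m (z - y) := by
      rw [Finset.sum_mul, ← Finset.sum_sub_distrib]
      exact Finset.sum_congr rfl (fun z _ => by ring)
    have hS : (∑ z ∈ Y, C (l z) * Em k m z) = (A + C y * B) * Em k m y - r := by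
      rw [hrepr]; ring
    rw [e1, hS]
    ring
  rw [hkey]
  exact dvd_add (dvd_add (h3.mul_left _) ((mem_Bsub.mp hr).mul_right _)) h4

open Pointwise in
lemma diff_inj [DecidableEq k] {d : ℕ} {Y : Finset k} (hd : 3 ≤ d) (hYcard : Y.card = d)
    (hYY : (Y - Y).card = d ^ 2 - d + 1) :
    ∀ z₁ ∈ Y, ∀ w₁ ∈ Y, ∀ z₂ ∈ Y, ∀ w₂ ∈ Y, z₁ ≠ w₁ → z₁ - w₁ = z₂ - w₂ →
      z₁ = z₂ ∧ w₁ = w₂ := by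
  have hY0 : 0 < Y.card := by omega
  obtain ⟨y₀, hy₀⟩ := Finset.card_pos.mp hY0
  have h0Y : (0 : k) ∈ Y - Y := by
    have := Finset.sub_mem_sub hy₀ hy₀
    simpa using this
  have himg : Finset.image (fun p : k × k => p.1 - p.2) Y.offDiag = (Y - Y).erase 0 := by
    ext w
    simp only [Finset.mem_image, Finset.mem_erase, Finset.mem_offDiag]
    constructor
    · rintro ⟨⟨a, b⟩, ⟨ha, hb, hab⟩, rfl⟩
      exact ⟨sub_ne_zero.mpr hab, Finset.sub_mem_sub ha hb⟩
    · rintro ⟨hw0, hw⟩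
      obtain ⟨a, ha, b, hb, rfl⟩ := Finset.mem_sub.mp hw
      exact ⟨(a, b), ⟨ha, hb, fun h => hw0 (sub_eq_zero.mpr h)⟩, rfl⟩
  have hcard : (Finset.image (fun p : k × k => p.1 - p.2) Y.offDiag).card = Y.offDiag.card := by
    rw [himg, Finset.card_erase_of_mem h0Y, hYY, Finset.offDiag_card, hYcard]
    have hsq : d ^ 2 = d * d := sq d
    omega
  have hinj := Finset.card_image_iff.mp hcard
  intro z₁ hz₁ w₁ hw₁ z₂ hz₂ w₂ hw₂ hne heq
  have hne2 : z₂ ≠ w₂ := by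
    intro h
    rw [h, sub_self, sub_eq_zero] at heq
    exact hne heq
  have hm1 : ((z₁, w₁) : k × k) ∈ Y.offDiag := Finset.mem_offDiag.mpr ⟨hz₁, hw₁, hne⟩
  have hm2 : ((z₂, w₂) : k × k) ∈ Y.offDiag := Finset.mem_offDiag.mpr ⟨hz₂, hw₂, hne2⟩
  have hp := hinj (Finset.mem_coe.mpr hm1) (Finset.mem_coe.mpr hm2) (by simpa using heq)
  exact ⟨congrArg Prod.fst hp, congrArg Prod.snd hp⟩

lemma sumT {m : ℕ} [DecidableEq k] {Y U : Finset k} (y' : k) (c : k → k)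
    (hsub : Y.image (· - y') ⊆ U) :
    ∑ w ∈ U, C (if w + y' ∈ Y then c (w + y') else 0) * Em k m w
      = ∑ z ∈ Y, C (c z) * Em k m (z - y') := by
  rw [← Finset.sum_subset hsub (fun w _ hw => ?_)]
  · rw [Finset.sum_image (fun a _ b _ h => by
      have : a - y' + y' = b - y' + y' := by rw [h]
      simpa using this)]
    refine Finset.sum_congr rfl (fun z hz => ?_)
    rw [sub_add_cancel, if_pos hz]
  · have hny : ¬ (w + y' ∈ Y) := fun hy => hw (Finset.mem_image.mpr ⟨w + y', hy, by ring⟩)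
    rw [if_neg hny, map_zero, zero_mul]

lemma stepD (hm0 : 0 < m) {Y : Finset k} {A B : Polynomial k} {y₁ : k} {c₁ : k → k}
    (hy₁ : y₁ ∈ Y) (hA0 : A.coeff 0 = 0) (hB0 : B.coeff 0 = 0)
    (hc : X ^ m ∣ (A + C y₁ * B) - ∑ z ∈ Y, C (c₁ z) * Em k m (z - y₁))
    (hzero : ∀ z ∈ Y, z ≠ y₁ → c₁ z = 0) : X ^ m ∣ A + C y₁ * B := by
  have hsum : ∑ z ∈ Y, C (c₁ z) * Em k m (z - y₁) = C (c₁ y₁) := by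
    rw [Finset.sum_eq_single y₁ (fun z hz hne => by rw [hzero z hz hne, map_zero, zero_mul])
      (fun h => absurd hy₁ h), sub_self, Em_zero hm0, mul_one]
  rw [hsum] at hc
  have h0 : (A + C y₁ * B - C (c₁ y₁)).coeff 0 = 0 := X_pow_dvd_iff.mp hc 0 hm0
  have hc1 : c₁ y₁ = 0 := by
    rw [coeff_sub, coeff_add, coeff_C_mul, hA0, hB0, mul_zero, add_zero, zero_sub,
      coeff_C, if_pos rfl, neg_eq_zero] at h0
    exact h0
  rwa [hc1, map_zero, sub_zero] at hc


end Aux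

open Pointwise in
/-- for generic exponentials (difference set of `Y` of maximal size),
no nonzero first-order operator `A + B·∂/∂β` with `A(0) = B(0) = 0`, `deg A, deg B < m`
preserves `V = span{e^{yβ} : y ∈ Y} + (β^m)`. -/
theorem stmt14 [DecidableEq k] (d m : ℕ) (hd : 3 ≤ d) (hm : 3 * d - 2 ≤ m)
    (hfac : ((m - 1).factorial : k) ≠ 0)
    (Y : Finset k) (hYcard : Y.card = d) (hYY : (Y - Y).card = d ^ 2 - d + 1)
    (A B : Polynomial k) (hA0 : A.eval 0 = 0) (hB0 : B.eval 0 = 0)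
    (hAdeg : A.degree < (m : ℕ)) (hBdeg : B.degree < (m : ℕ))
    (hpres : ∀ v ∈ Submodule.span k ((Em k m) '' ↑Y) ⊔ Bsub k m,
      A * v + B * derivative v ∈ Submodule.span k ((Em k m) '' ↑Y) ⊔ Bsub k m) :
    A = 0 ∧ B = 0 := by
  have hm0 : 0 < m := by omega
  obtain ⟨y₁, hy₁⟩ := Finset.card_pos.mp (show 0 < Y.card by omega)
  obtain ⟨y₂, hy₂'⟩ := Finset.card_pos.mp (show 0 < (Y.erase y₁).card by
    rw [Finset.card_erase_of_mem hy₁, hYcard]; omega)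
  obtain ⟨y₃, hy₃'⟩ := Finset.card_pos.mp (show 0 < ((Y.erase y₁).erase y₂).card by
    rw [Finset.card_erase_of_mem hy₂', Finset.card_erase_of_mem hy₁, hYcard]; omega)
  obtain ⟨h21, hy₂⟩ := Finset.mem_erase.mp hy₂'
  obtain ⟨h32, hy₃''⟩ := Finset.mem_erase.mp hy₃'
  obtain ⟨h31, hy₃⟩ := Finset.mem_erase.mp hy₃''
  have hA0' : A.coeff 0 = 0 := by rw [coeff_zero_eq_eval_zero]; exact hA0
  have hB0' : B.coeff 0 = 0 := by rw [coeff_zero_eq_eval_zero]; exact hB0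
  have hEmem : ∀ y ∈ Y, Em k m y ∈ Submodule.span k ((Em k m) '' ↑Y) ⊔ Bsub k m := fun y hy =>
    Submodule.mem_sup_left (Submodule.subset_span ⟨y, hy, rfl⟩)
  obtain ⟨c₁, hc₁⟩ := stepA hfac hm0 hB0' y₁ (hpres _ (hEmem y₁ hy₁))
  obtain ⟨c₂, hc₂⟩ := stepA hfac hm0 hB0' y₂ (hpres _ (hEmem y₂ hy₂))
  obtain ⟨c₃, hc₃⟩ := stepA hfac hm0 hB0' y₃ (hpres _ (hEmem y₃ hy₃))
  have hdiff := diff_inj hd hYcard hYY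
  set U : Finset k := (Y.image (· - y₁)) ∪ (Y.image (· - y₂)) ∪ (Y.image (· - y₃)) with hUdef
  have hsub₁ : Y.image (· - y₁) ⊆ U := by
    intro w hw; exact Finset.mem_union_left _ (Finset.mem_union_left _ hw)
  have hsub₂ : Y.image (· - y₂) ⊆ U := by
    intro w hw; exact Finset.mem_union_left _ (Finset.mem_union_right _ hw)
  have hsub₃ : Y.image (· - y₃) ⊆ U := by
    intro w hw; exact Finset.mem_union_right _ hw
  set g : k → k := fun w =>
    (y₂ - y₃) * (if w + y₁ ∈ Y then c₁ (w + y₁) else 0) +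
    (y₃ - y₁) * (if w + y₂ ∈ Y then c₂ (w + y₂) else 0) +
    (y₁ - y₂) * (if w + y₃ ∈ Y then c₃ (w + y₃) else 0) with hgdef
  -- claim 1 : divisibility
  have hdvdU : X ^ m ∣ ∑ w ∈ U, C (g w) * Em k m w := by
    have e2 : ∑ w ∈ U, C (g w) * Em k m w =
        C (y₂ - y₃) * (∑ w ∈ U, C (if w + y₁ ∈ Y then c₁ (w + y₁) else 0) * Em k m w) +
        C (y₃ - y₁) * (∑ w ∈ U, C (if w + y₂ ∈ Y then c₂ (w + y₂) else 0) * Em k m w) +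
        C (y₁ - y₂) * (∑ w ∈ U, C (if w + y₃ ∈ Y then c₃ (w + y₃) else 0) * Em k m w) := by
      rw [Finset.mul_sum, Finset.mul_sum, Finset.mul_sum, ← Finset.sum_add_distrib,
        ← Finset.sum_add_distrib]
      refine Finset.sum_congr rfl (fun w _ => ?_)
      rw [hgdef]
      simp only [map_add, _root_.map_mul]
      ring
    rw [e2, sumT y₁ c₁ hsub₁, sumT y₂ c₂ hsub₂, sumT y₃ c₃ hsub₃]
    have hzero : C (y₂ - y₃) * (A + C y₁ * B) + C (y₃ - y₁) * (A + C y₂ * B) +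
        C (y₁ - y₂) * (A + C y₃ * B) = 0 := by
      simp only [map_sub]
      ring
    have e3 : C (y₂ - y₃) * (∑ z ∈ Y, C (c₁ z) * Em k m (z - y₁)) +
        C (y₃ - y₁) * (∑ z ∈ Y, C (c₂ z) * Em k m (z - y₂)) +
        C (y₁ - y₂) * (∑ z ∈ Y, C (c₃ z) * Em k m (z - y₃)) =
        C (y₂ - y₃) * ((∑ z ∈ Y, C (c₁ z) * Em k m (z - y₁)) - (A + C y₁ * B)) +
        C (y₃ - y₁) * ((∑ z ∈ Y, C (c₂ z) * Em k m (z - y₂)) - (A + C y₂ * B)) +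
        C (y₁ - y₂) * ((∑ z ∈ Y, C (c₃ z) * Em k m (z - y₃)) - (A + C y₃ * B)) := by
      linear_combination hzero
    rw [e3]
    have hd1 : X ^ m ∣ (∑ z ∈ Y, C (c₁ z) * Em k m (z - y₁)) - (A + C y₁ * B) := by
      have := dvd_neg.mpr hc₁; rwa [neg_sub] at this
    have hd2 : X ^ m ∣ (∑ z ∈ Y, C (c₂ z) * Em k m (z - y₂)) - (A + C y₂ * B) := by
      have := dvd_neg.mpr hc₂; rwa [neg_sub] at this
    have hd3 : X ^ m ∣ (∑ z ∈ Y, C (c₃ z) * Em k m (z - y₃)) - (A + C y₃ * B) := by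
      have := dvd_neg.mpr hc₃; rwa [neg_sub] at this
    exact dvd_add (dvd_add (hd1.mul_left _) (hd2.mul_left _)) (hd3.mul_left _)
  -- claim 2 : cardinality
  have hcardU : U.card ≤ m := by
    have h0img : ∀ y ∈ Y, (0 : k) ∈ Y.image (· - y) :=
      fun y hy => Finset.mem_image.mpr ⟨y, hy, sub_self y⟩
    have hsub : U ⊆ Y.image (· - y₁) ∪ (Y.image (· - y₂)).erase 0 ∪
        (Y.image (· - y₃)).erase 0 := by
      intro w hw
      rw [hUdef] at hw
      simp only [Finset.mem_union] at hw ⊢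
      rcases hw with (hw | hw) | hw
      · exact Or.inl (Or.inl hw)
      · by_cases hw0 : w = 0
        · exact Or.inl (Or.inl (hw0 ▸ h0img y₁ hy₁))
        · exact Or.inl (Or.inr (Finset.mem_erase.mpr ⟨hw0, hw⟩))
      · by_cases hw0 : w = 0
        · exact Or.inl (Or.inl (hw0 ▸ h0img y₁ hy₁))
        · exact Or.inr (Finset.mem_erase.mpr ⟨hw0, hw⟩)
    have hc1 : (Y.image (· - y₁)).card = d := by
      rw [Finset.card_image_of_injective _ sub_left_injective, hYcard]
    have hc2 : ((Y.image (· - y₂)).erase 0).card = d - 1 := by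
      rw [Finset.card_erase_of_mem (h0img y₂ hy₂),
        Finset.card_image_of_injective _ sub_left_injective, hYcard]
    have hc3 : ((Y.image (· - y₃)).erase 0).card = d - 1 := by
      rw [Finset.card_erase_of_mem (h0img y₃ hy₃),
        Finset.card_image_of_injective _ sub_left_injective, hYcard]
    have := Finset.card_le_card hsub
    have h2 := Finset.card_union_le (Y.image (· - y₁) ∪ (Y.image (· - y₂)).erase 0)
      ((Y.image (· - y₃)).erase 0)
    have h3 := Finset.card_union_le (Y.image (· - y₁)) ((Y.image (· - y₂)).erase 0)
    omega
  have hg := indep hfac hm0 U hcardU g hdvdU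
  -- claim 3 : coefficients vanish
  have hz1 : ∀ z ∈ Y, z ≠ y₁ → c₁ z = 0 := by
    intro z hz hzne
    have hwU : z - y₁ ∈ U := hsub₁ (Finset.mem_image.mpr ⟨z, hz, rfl⟩)
    have h := hg _ hwU
    rw [hgdef] at h
    simp only at h
    rw [sub_add_cancel, if_pos hz] at h
    have hD2 : ¬ (z - y₁ + y₂ ∈ Y) := by
      intro hmem
      have heq : z - y₁ = (z - y₁ + y₂) - y₂ := by ring
      have := hdiff z hz y₁ hy₁ (z - y₁ + y₂) hmem y₂ hy₂ hzne heq
      exact h21 this.2.symm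
    have hD3 : ¬ (z - y₁ + y₃ ∈ Y) := by
      intro hmem
      have heq : z - y₁ = (z - y₁ + y₃) - y₃ := by ring
      have := hdiff z hz y₁ hy₁ (z - y₁ + y₃) hmem y₃ hy₃ hzne heq
      exact h31 this.2.symm
    rw [if_neg hD2, if_neg hD3, mul_zero, mul_zero, add_zero, add_zero] at h
    rcases mul_eq_zero.mp h with h' | h'
    · exact absurd h' (sub_ne_zero.mpr (fun hh => h32 hh.symm))
    · exact h'
  have hz2 : ∀ z ∈ Y, z ≠ y₂ → c₂ z = 0 := by
    intro z hz hzne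
    have hwU : z - y₂ ∈ U := hsub₂ (Finset.mem_image.mpr ⟨z, hz, rfl⟩)
    have h := hg _ hwU
    rw [hgdef] at h
    simp only at h
    rw [sub_add_cancel, if_pos hz] at h
    have hD1 : ¬ (z - y₂ + y₁ ∈ Y) := by
      intro hmem
      have heq : z - y₂ = (z - y₂ + y₁) - y₁ := by ring
      have := hdiff z hz y₂ hy₂ (z - y₂ + y₁) hmem y₁ hy₁ hzne heq
      exact h21 this.2
    have hD3 : ¬ (z - y₂ + y₃ ∈ Y) := by
      intro hmem
      have heq : z - y₂ = (z - y₂ + y₃) - y₃ := by ring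
      have := hdiff z hz y₂ hy₂ (z - y₂ + y₃) hmem y₃ hy₃ hzne heq
      exact h32 this.2.symm
    rw [if_neg hD1, if_neg hD3, mul_zero, mul_zero, add_zero, zero_add] at h
    rcases mul_eq_zero.mp h with h' | h'
    · exact absurd h' (sub_ne_zero.mpr h31)
    · exact h'
  -- claim 4
  have h4a := stepD hm0 hy₁ hA0' hB0' hc₁ hz1
  have h4b := stepD hm0 hy₂ hA0' hB0' hc₂ hz2
  -- claim 5
  have hd12 : X ^ m ∣ (C y₁ - C y₂) * B := by
    have heq : (C y₁ - C y₂) * B = (A + C y₁ * B) - (A + C y₂ * B) := by ring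
    rw [heq]
    exact dvd_sub h4a h4b
  have hunit : IsUnit (C y₁ - C y₂ : Polynomial k) := by
    rw [← C_sub]
    exact isUnit_C.mpr (isUnit_iff_ne_zero.mpr (sub_ne_zero.mpr (fun hh => h21 hh.symm)))
  have hBdvd : X ^ m ∣ B := (hunit.dvd_mul_left).mp hd12
  have hB : B = 0 := eq_zero_of_dvd_of_degree_lt hBdvd (by rw [degree_X_pow]; exact hBdeg)
  have hA : A = 0 := by
    refine eq_zero_of_dvd_of_degree_lt ?_ (by rw [degree_X_pow]; exact hAdeg)
    have := h4a
    rwa [hB, mul_zero, add_zero] at this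
  exact ⟨hA, hB⟩


end
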